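/- Let n, k, j be natural numbers with k ≥ 1, 2 ≤ j, and 2j ≤ n − k, and let H be any finite simple graph on k vertices. Then Π₂(G(j, n−k−j)) < Π₂(G(1, n−k−1)), where both graphs are built from the same graph H. -/

import Mathlib

/-- The second multiplicative Zagreb index `Π₂(G) = ∏_{u ∈ V(G)} d(u)^{d(u)}`
(with the natural-number convention `0^0 = 1`). -/
noncomputable def multZagreb2 {V : Type*} [Fintype V] (G : SimpleGraph V) : ℕ :=
  letI := Classical.decRel G.Adj
  ∏ v : V, (G.degree v) ^ (G.degree v)

/-- The join `G(j, l) = K_j ⊕ H ⊕ K_l`: disjoint copies of the complete graphs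
`K_j`, `K_l` and of the graph `H`, together with all edges between `K_j` and `H`
and all edges between `H` and `K_l` (and no edges between `K_j` and `K_l`). -/
def joinCliques {W : Type*} (H : SimpleGraph W) (j l : ℕ) :
    SimpleGraph (Fin j ⊕ (W ⊕ Fin l)) :=
  SimpleGraph.fromRel (fun x y =>
    match x, y with
    | Sum.inl _, Sum.inl _ => True
    | Sum.inl _, Sum.inr (Sum.inl _) => True
    | Sum.inr (Sum.inl w), Sum.inr (Sum.inl w') => H.Adj w w'
    | Sum.inr (Sum.inl _), Sum.inr (Sum.inr _) => True
    | Sum.inr (Sum.inr _), Sum.inr (Sum.inr _) => True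
    | _, _ => False)

open Real Set

/-- The auxiliary function `x ↦ x(x+K)·log(x+K)`. -/
noncomputable def phiF (K : ℝ) (x : ℝ) : ℝ := (x^2 + K*x) * Real.log (x + K)

lemma phiF_hasDeriv (K : ℝ) (x : ℝ) (hx : 0 < x + K) :
    HasDerivAt (phiF K) ((2*x + K) * Real.log (x + K) + x) x := by
  have h1 : HasDerivAt (fun x : ℝ => x^2 + K*x) (2*x + K) x := by
    simpa [Pi.add_def] using ((hasDerivAt_pow 2 x).add ((hasDerivAt_id x).const_mul K))
  have h2 : HasDerivAt (fun x : ℝ => Real.log (x + K)) ((x+K)⁻¹) x := by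
    have := (Real.hasDerivAt_log (ne_of_gt hx)).comp x ((hasDerivAt_id x).add_const K)
    simpa [Function.comp_def] using this
  have := h1.mul h2
  refine this.congr_deriv ?_
  rw [show x^2 + K*x = x*(x+K) by ring, mul_assoc, mul_inv_cancel₀ (ne_of_gt hx), mul_one]

lemma phiF_strictConvex (K : ℝ) (hK : 0 ≤ K) : StrictConvexOn ℝ (Ici 1) (phiF K) := by
  have hpos : ∀ x : ℝ, x ∈ Ici (1:ℝ) → 0 < x + K := fun x hx => by
    have : (1:ℝ) ≤ x := hx
    linarith
  apply StrictMonoOn.strictConvexOn_of_deriv (convex_Ici 1)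
  · intro x hx
    exact ((phiF_hasDeriv K x (hpos x hx)).continuousAt).continuousWithinAt
  · rw [interior_Ici]
    intro x hx y hy hxy
    have hx1 : (1:ℝ) < x := hx
    have hy1 : (1:ℝ) < y := hy
    rw [(phiF_hasDeriv K x (by linarith)).deriv, (phiF_hasDeriv K y (by linarith)).deriv]
    have hlx : 0 < Real.log (x + K) := Real.log_pos (by linarith)
    have hly : Real.log (x + K) ≤ Real.log (y + K) :=
      Real.log_le_log (by linarith) (by linarith)
    have : (2*x + K) * Real.log (x + K) < (2*y + K) * Real.log (y + K) := by
      have h2 : (2*x+K) < 2*y+K := by linarith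
      nlinarith
    linarith

/-- Two-point majorization for a strictly convex function on `[1, ∞)`. -/
lemma two_point {f : ℝ → ℝ} (hconv : StrictConvexOn ℝ (Ici 1) f) {x m : ℝ}
    (hx : 1 < x) (hxm : 2*x ≤ m) :
    f x + f (m - x) < f 1 + f (m-1) := by
  have hm2 : 2 < m := by linarith
  set α : ℝ := (m-1-x)/(m-2) with hα
  set β : ℝ := (x-1)/(m-2) with hβ
  have hd : (0:ℝ) < m - 2 := by linarith
  have hxm1 : x < m - 1 := by linarith
  have hα0 : 0 < α := div_pos (by linarith) hd
  have hβ0 : 0 < β := div_pos (by linarith) hd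
  have hαβ : α + β = 1 := by
    rw [hα, hβ, ← add_div, div_eq_one_iff_eq (ne_of_gt hd)]; ring
  have h1 : (1:ℝ) ∈ Ici (1:ℝ) := mem_Ici.mpr le_rfl
  have h2 : (m-1:ℝ) ∈ Ici (1:ℝ) := mem_Ici.mpr (by linarith)
  have hne : (1:ℝ) ≠ m - 1 := by intro h; rw [← h] at hxm1; linarith
  have e1 : α • (1:ℝ) + β • (m-1) = x := by
    rw [smul_eq_mul, smul_eq_mul, hα, hβ]; field_simp; ring
  have e2 : β • (1:ℝ) + α • (m-1) = m - x := by
    rw [smul_eq_mul, smul_eq_mul, hα, hβ]; field_simp; ring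
  have c1 := hconv.2 h1 h2 hne hα0 hβ0 hαβ
  have c2 := hconv.2 h1 h2 hne hβ0 hα0 (by linarith)
  rw [e1] at c1; rw [e2] at c2
  simp only [smul_eq_mul] at c1 c2
  have key : α * f 1 + β * f (m-1) + (β * f 1 + α * f (m-1))
      = f 1 + f (m-1) := by
    linear_combination (f 1) * hαβ + (f (m-1)) * hαβ
  linarith

/-- The core arithmetic inequality. -/
lemma core_ineq (k j m : ℕ) (hk : 1 ≤ k) (hj : 2 ≤ j) (hjm : 2*j ≤ m) :
    ((j - 1 + k) ^ (j - 1 + k)) ^ j * ((m - j - 1 + k) ^ (m - j - 1 + k)) ^ (m - j)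
      < (k ^ k) ^ 1 * ((m - 2 + k) ^ (m - 2 + k)) ^ (m - 1) := by
  set K : ℝ := (k:ℝ) - 1 with hKdef
  have hk1 : (1:ℝ) ≤ (k:ℝ) := by exact_mod_cast hk
  have hK0 : 0 ≤ K := by rw [hKdef]; linarith
  have hjR : (2:ℝ) ≤ (j:ℝ) := by exact_mod_cast hj
  have hmj : 2*(j:ℝ) ≤ (m:ℝ) := by exact_mod_cast hjm
  have e1 : ((j - 1 + k : ℕ) : ℝ) = (j:ℝ) + K := by
    rw [Nat.cast_add, Nat.cast_sub (by omega : 1 ≤ j), hKdef]; push_cast; ring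
  have e2 : ((m - j - 1 + k : ℕ) : ℝ) = ((m:ℝ) - (j:ℝ)) + K := by
    rw [Nat.cast_add, Nat.cast_sub (by omega : 1 ≤ m - j),
      Nat.cast_sub (by omega : j ≤ m), hKdef]; push_cast; ring
  have e3 : ((m - 2 + k : ℕ) : ℝ) = ((m:ℝ) - 1) + K := by
    rw [Nat.cast_add, Nat.cast_sub (by omega : 2 ≤ m), hKdef]; push_cast; ring
  have e4 : ((m - j : ℕ) : ℝ) = (m:ℝ) - (j:ℝ) := by
    rw [Nat.cast_sub (by omega : j ≤ m)]
  have e5 : ((m - 1 : ℕ) : ℝ) = (m:ℝ) - 1 := by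
    rw [Nat.cast_sub (by omega : 1 ≤ m)]; push_cast; ring
  have p1 : (0:ℝ) < (j:ℝ) + K := by linarith
  have p2 : (0:ℝ) < ((m:ℝ) - (j:ℝ)) + K := by linarith
  have p3 : (0:ℝ) < ((m:ℝ) - 1) + K := by linarith
  have pk : (0:ℝ) < (k:ℝ) := by linarith
  rw [← Nat.cast_lt (α := ℝ)]
  push_cast [e1, e2, e3, e4, e5]
  have hL : (0:ℝ) < (((j:ℝ) + K) ^ (j - 1 + k)) ^ j *
      ((((m:ℝ) - (j:ℝ)) + K) ^ (m - j - 1 + k)) ^ (m - j) := by positivity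
  have hR : (0:ℝ) < ((k:ℝ) ^ k) ^ 1 * ((((m:ℝ) - 1) + K) ^ (m - 2 + k)) ^ (m - 1) := by
    positivity
  rw [← Real.log_lt_log_iff hL hR]
  rw [Real.log_mul (by positivity) (by positivity),
    Real.log_mul (by positivity) (by positivity),
    Real.log_pow, Real.log_pow, Real.log_pow, Real.log_pow, Real.log_pow, Real.log_pow,
    Real.log_pow, Real.log_pow, e1, e2, e3, e4, e5]
  have H := two_point (phiF_strictConvex K hK0) (x := (j:ℝ)) (m := (m:ℝ))
    (by linarith) hmj
  simp only [phiF] at H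
  push_cast
  have E1 : (j:ℝ) * (((j:ℝ) + K) * log ((j:ℝ) + K)) +
      ((m:ℝ) - (j:ℝ)) * (((m:ℝ) - (j:ℝ) + K) * log ((m:ℝ) - (j:ℝ) + K)) =
      ((j:ℝ) ^ 2 + K * (j:ℝ)) * log ((j:ℝ) + K) +
      (((m:ℝ) - (j:ℝ)) ^ 2 + K * ((m:ℝ) - (j:ℝ))) * log ((m:ℝ) - (j:ℝ) + K) := by ring
  have E2 : 1 * ((k:ℝ) * log (k:ℝ)) +
      ((m:ℝ) - 1) * (((m:ℝ) - 1 + K) * log ((m:ℝ) - 1 + K)) =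
      ((1:ℝ) ^ 2 + K * 1) * log (1 + K) +
      (((m:ℝ) - 1) ^ 2 + K * ((m:ℝ) - 1)) * log ((m:ℝ) - 1 + K) := by
    rw [show (1:ℝ) + K = (k:ℝ) from by rw [hKdef]; ring, hKdef]; ring
  rw [E1, E2]
  exact H

lemma card_subtype_true (α : Type*) [Fintype α] :
    Fintype.card {_x : α // True} = Fintype.card α :=
  Fintype.card_congr (Equiv.subtypeUnivEquiv (fun _ => trivial))

section Degrees

variable {W : Type*} [Fintype W] (H : SimpleGraph W) (j l : ℕ)

lemma degree_joinCliques_inl (i : Fin j)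
    [Fintype ((joinCliques H j l).neighborSet (Sum.inl i))] :
    (joinCliques H j l).degree (Sum.inl i) = j - 1 + Fintype.card W := by
  classical
  rw [← SimpleGraph.card_neighborSet_eq_degree]
  have e : ((joinCliques H j l).neighborSet (Sum.inl i)) ≃
      ({i' : Fin j // i' ≠ i} ⊕ ({_w : W // True} ⊕ {_i : Fin l // False})) := by
    refine (Equiv.subtypeSum).trans
      (Equiv.sumCongr ?_ (Equiv.subtypeSum.trans (Equiv.sumCongr ?_ ?_)))
    · exact Equiv.subtypeEquivRight (fun i' => by
        simp [joinCliques, SimpleGraph.fromRel_adj, ne_comm])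
    · exact Equiv.subtypeEquivRight (fun w => by
        simp [joinCliques, SimpleGraph.fromRel_adj])
    · exact Equiv.subtypeEquivRight (fun i' => by
        simp [joinCliques, SimpleGraph.fromRel_adj])
  rw [Fintype.card_congr e]
  simp [Fintype.card_sum, card_subtype_true]

lemma degree_joinCliques_mid (w : W) [Fintype (H.neighborSet w)]
    [Fintype ((joinCliques H j l).neighborSet (Sum.inr (Sum.inl w)))] :
    (joinCliques H j l).degree (Sum.inr (Sum.inl w)) = H.degree w + (j + l) := by
  classical
  rw [← SimpleGraph.card_neighborSet_eq_degree]
  have e : ((joinCliques H j l).neighborSet (Sum.inr (Sum.inl w))) ≃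
      ({_i : Fin j // True} ⊕ ({w' : W // H.Adj w w'} ⊕ {_i : Fin l // True})) := by
    refine (Equiv.subtypeSum).trans
      (Equiv.sumCongr ?_ (Equiv.subtypeSum.trans (Equiv.sumCongr ?_ ?_)))
    · exact Equiv.subtypeEquivRight (fun i' => by
        simp [joinCliques, SimpleGraph.fromRel_adj])
    · exact Equiv.subtypeEquivRight (fun w' => by
        simp only [joinCliques, SimpleGraph.fromRel_adj]
        constructor
        · rintro ⟨-, h | h⟩; exact h; exact h.symm
        · intro h; exact ⟨by simpa using h.ne, Or.inl h⟩)
    · exact Equiv.subtypeEquivRight (fun i' => by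
        simp [joinCliques, SimpleGraph.fromRel_adj])
  rw [Fintype.card_congr e]
  have hc : Fintype.card {w' : W // H.Adj w w'} = H.degree w := by
    rw [← SimpleGraph.card_neighborSet_eq_degree]
    exact Fintype.card_congr (Equiv.refl _)
  simp [Fintype.card_sum, card_subtype_true, hc]
  ring

lemma degree_joinCliques_inr (i : Fin l)
    [Fintype ((joinCliques H j l).neighborSet (Sum.inr (Sum.inr i)))] :
    (joinCliques H j l).degree (Sum.inr (Sum.inr i)) = l - 1 + Fintype.card W := by
  classical
  rw [← SimpleGraph.card_neighborSet_eq_degree]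
  have e : ((joinCliques H j l).neighborSet (Sum.inr (Sum.inr i))) ≃
      ({_i : Fin j // False} ⊕ ({_w : W // True} ⊕ {i' : Fin l // i' ≠ i})) := by
    refine (Equiv.subtypeSum).trans
      (Equiv.sumCongr ?_ (Equiv.subtypeSum.trans (Equiv.sumCongr ?_ ?_)))
    · exact Equiv.subtypeEquivRight (fun i' => by
        simp [joinCliques, SimpleGraph.fromRel_adj])
    · exact Equiv.subtypeEquivRight (fun w' => by
        simp [joinCliques, SimpleGraph.fromRel_adj])
    · exact Equiv.subtypeEquivRight (fun i' => by
        simp [joinCliques, SimpleGraph.fromRel_adj, ne_comm])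
  rw [Fintype.card_congr e]
  simp [Fintype.card_sum, card_subtype_true]
  ring

lemma multZagreb2_joinCliques [DecidableRel H.Adj] :
    multZagreb2 (joinCliques H j l) =
      ((j - 1 + Fintype.card W) ^ (j - 1 + Fintype.card W)) ^ j *
        ((∏ w : W, (H.degree w + (j + l)) ^ (H.degree w + (j + l))) *
          ((l - 1 + Fintype.card W) ^ (l - 1 + Fintype.card W)) ^ l) := by
  classical
  rw [multZagreb2]
  rw [Fintype.prod_sum_type]
  congr 1
  · rw [Finset.prod_congr rfl (fun i _ => by rw [degree_joinCliques_inl])]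
    simp [Finset.prod_const]
  · rw [Fintype.prod_sum_type]
    congr 1
    · exact Finset.prod_congr rfl (fun w _ => by rw [degree_joinCliques_mid])
    · rw [Finset.prod_congr rfl (fun i _ => by rw [degree_joinCliques_inr])]
      simp [Finset.prod_const]

end Degrees

/-- **Lemma 5 (Wang).** If `k ≥ 1`, `2 ≤ j` and `2j ≤ n - k`, then
`Π₂(G(j, n-k-j)) < Π₂(G(1, n-k-1))`, where `H` is any graph on `k` vertices. -/
theorem multZagreb2_joinCliques_lt {W : Type*} [Fintype W] (H : SimpleGraph W)
    (n k j : ℕ) (hk : 1 ≤ k) (hW : Fintype.card W = k)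
    (hj : 2 ≤ j) (hjn : 2 * j ≤ n - k) :
    multZagreb2 (joinCliques H j (n - k - j)) <
      multZagreb2 (joinCliques H 1 (n - k - 1)) := by
  classical
  set m : ℕ := n - k with hm
  rw [multZagreb2_joinCliques H j (m - j), multZagreb2_joinCliques H 1 (m - 1), hW]
  have hjm : j ≤ m := by omega
  have h1m : 1 ≤ m := by omega
  have hsum1 : j + (m - j) = m := by omega
  have hsum2 : 1 + (m - 1) = m := by omega
  rw [hsum1, hsum2]
  have hP : 0 < ∏ w : W, (H.degree w + m) ^ (H.degree w + m) := by
    apply Finset.prod_pos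
    intro w _
    have : 0 < H.degree w + m := by omega
    positivity
  set P : ℕ := ∏ w : W, (H.degree w + m) ^ (H.degree w + m) with hPdef
  have key := core_ineq k j m hk hj hjn
  have e1 : 1 - 1 + k = k := by omega
  have e2 : m - 1 - 1 + k = m - 2 + k := by omega
  rw [e1, e2]
  calc ((j - 1 + k) ^ (j - 1 + k)) ^ j *
        (P * ((m - j - 1 + k) ^ (m - j - 1 + k)) ^ (m - j))
      = P * (((j - 1 + k) ^ (j - 1 + k)) ^ j *
          ((m - j - 1 + k) ^ (m - j - 1 + k)) ^ (m - j)) := by ring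
    _ < P * ((k ^ k) ^ 1 * ((m - 2 + k) ^ (m - 2 + k)) ^ (m - 1)) := by
        exact (Nat.mul_lt_mul_left hP).mpr key
    _ = (k ^ k) ^ 1 * (P * ((m - 2 + k) ^ (m - 2 + k)) ^ (m - 1)) := by ring
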